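/- For all u, v ∈ (0,1), the function f(u,v) = 2·ln((1−u)(1+v)/((1+u)(1−v))) − 4v(u+v)/(u(1−v²)) + 4u/(1−u²) + 4v²(2(1−u)v + (1−v)²)/(u(1−v²)²) is nonnegative, with equality on the diagonal u = v. -/

import Mathlib

/-- The function `f(u,v)` from inequality (la_8) in the paper. -/
noncomputable def fla (u v : ℝ) : ℝ :=
  2 * Real.log ((1 - u) * (1 + v) / ((1 + u) * (1 - v)))
    - 4 * v / (u * (1 - v ^ 2)) * (u + v)
    + 4 * u / (1 - u ^ 2)
    + 4 * v ^ 2 / (u * (1 - v ^ 2) ^ 2) * (2 * (1 - u) * v + (1 - v) ^ 2)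

/-- Separated form of `fla` valid on `(0,1)²`. -/
noncomputable def flaF (v u : ℝ) : ℝ :=
  2 * Real.log (1 - u) - 2 * Real.log (1 + u)
    + (2 * Real.log (1 + v) - 2 * Real.log (1 - v)
        - 4 * v / (1 - v ^ 2) - 8 * v ^ 3 / (1 - v ^ 2) ^ 2)
    + (8 * v ^ 4 / (1 - v ^ 2) ^ 2) / u
    + 4 * u / (1 - u ^ 2)

lemma fla_eq (u v : ℝ) (hu : u ∈ Set.Ioo (0:ℝ) 1) (hv : v ∈ Set.Ioo (0:ℝ) 1) :
    fla u v = flaF v u := by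
  obtain ⟨hu0, hu1⟩ := hu
  obtain ⟨hv0, hv1⟩ := hv
  have h1 : (0:ℝ) < 1 - u := by linarith
  have h2 : (0:ℝ) < 1 + u := by linarith
  have h3 : (0:ℝ) < 1 - v := by linarith
  have h4 : (0:ℝ) < 1 + v := by linarith
  have hu2 : (1:ℝ) - u ^ 2 ≠ 0 := by nlinarith
  have hv2 : (1:ℝ) - v ^ 2 ≠ 0 := by nlinarith
  unfold fla flaF
  rw [Real.log_div (by positivity) (by positivity), Real.log_mul h1.ne' h4.ne',
    Real.log_mul h2.ne' h3.ne']
  field_simp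
  ring

lemma flaF_hasDerivAt (v u : ℝ) (hu : u ∈ Set.Ioo (0:ℝ) 1) :
    HasDerivAt (flaF v)
      (8 * u ^ 2 / (1 - u ^ 2) ^ 2 - 8 * v ^ 4 / (u ^ 2 * (1 - v ^ 2) ^ 2)) u := by
  obtain ⟨hu0, hu1⟩ := hu
  have h1 : (1:ℝ) - u ≠ 0 := by linarith
  have h2 : (1:ℝ) + u ≠ 0 := by linarith
  have hu2 : (1:ℝ) - u ^ 2 ≠ 0 := by nlinarith
  have d1 : HasDerivAt (fun x : ℝ => Real.log (1 - x)) (-(1 - u)⁻¹) u := by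
    have := (Real.hasDerivAt_log h1).comp u ((hasDerivAt_id u).const_sub 1)
    simpa [Function.comp_def] using this
  have d2 : HasDerivAt (fun x : ℝ => Real.log (1 + x)) ((1 + u)⁻¹) u := by
    have := (Real.hasDerivAt_log h2).comp u ((hasDerivAt_id u).const_add 1)
    simpa [Function.comp_def] using this
  have d3 : HasDerivAt (fun x : ℝ => (8 * v ^ 4 / (1 - v ^ 2) ^ 2) / x)
      (8 * v ^ 4 / (1 - v ^ 2) ^ 2 * (-(u ^ 2)⁻¹)) u := by
    have h := (hasDerivAt_inv hu0.ne').const_mul (8 * v ^ 4 / (1 - v ^ 2) ^ 2)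
    simp only [div_eq_mul_inv] at h ⊢
    exact h
  have d4 : HasDerivAt (fun x : ℝ => 4 * x / (1 - x ^ 2))
      ((4 * (1 - u ^ 2) - 4 * u * (-(2 * u))) / (1 - u ^ 2) ^ 2) u := by
    have hf : HasDerivAt (fun x : ℝ => 4 * x) 4 u := by
      simpa using (hasDerivAt_id u).const_mul 4
    have hg : HasDerivAt (fun x : ℝ => 1 - x ^ 2) (-(2 * u)) u := by
      have := ((hasDerivAt_pow 2 u).const_sub 1)
      simpa using this
    exact hf.div hg hu2
  have := (((((d1.const_mul 2).sub (d2.const_mul 2)).add_const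
      (2 * Real.log (1 + v) - 2 * Real.log (1 - v)
        - 4 * v / (1 - v ^ 2) - 8 * v ^ 3 / (1 - v ^ 2) ^ 2)).add d3).add d4)
  refine this.congr_deriv ?_
  field_simp
  ring

lemma fla_hasDerivAt (v u : ℝ) (hu : u ∈ Set.Ioo (0:ℝ) 1) (hv : v ∈ Set.Ioo (0:ℝ) 1) :
    HasDerivAt (fun x => fla x v)
      (8 * u ^ 2 / (1 - u ^ 2) ^ 2 - 8 * v ^ 4 / (u ^ 2 * (1 - v ^ 2) ^ 2)) u := by
  refine (flaF_hasDerivAt v u hu).congr_of_eventuallyEq ?_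
  filter_upwards [isOpen_Ioo.mem_nhds hu] with x hx
  exact fla_eq x v hx hv

lemma fla_diag (u : ℝ) (hu : u ∈ Set.Ioo (0:ℝ) 1) : fla u u = 0 := by
  obtain ⟨hu0, hu1⟩ := hu
  have h1 : (0:ℝ) < 1 - u := by linarith
  have h2 : (0:ℝ) < 1 + u := by linarith
  have hu2 : (1:ℝ) - u ^ 2 ≠ 0 := by nlinarith
  have hlog : (1 - u) * (1 + u) / ((1 + u) * (1 - u)) = 1 := by
    rw [mul_comm]
    exact div_self (by positivity)
  unfold fla
  rw [hlog, Real.log_one]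
  field_simp
  ring

theorem fla_nonneg_and_diag_zero :
    (∀ u v : ℝ, u ∈ Set.Ioo (0:ℝ) 1 → v ∈ Set.Ioo (0:ℝ) 1 → 0 ≤ fla u v) ∧
    (∀ u : ℝ, u ∈ Set.Ioo (0:ℝ) 1 → fla u u = 0) := by
  constructor
  · intro u v hu hv
    obtain ⟨hu0, hu1⟩ := hu
    obtain ⟨hv0, hv1⟩ := hv
    rcases lt_trichotomy u v with h | h | h
    · -- u < v : fla · v is strictly antitone on [u, v]
      have hsub : Set.Icc u v ⊆ Set.Ioo (0:ℝ) 1 := fun x hx =>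
        ⟨lt_of_lt_of_le hu0 hx.1, lt_of_le_of_lt hx.2 hv1⟩
      have hanti : StrictAntiOn (fun x => fla x v) (Set.Icc u v) := by
        apply strictAntiOn_of_deriv_neg (convex_Icc u v)
        · intro x hx
          exact (fla_hasDerivAt v x (hsub hx) ⟨hv0, hv1⟩).continuousAt.continuousWithinAt
        · intro x hx
          rw [interior_Icc] at hx
          have hx01 : x ∈ Set.Ioo (0:ℝ) 1 :=
            ⟨lt_trans hu0 hx.1, lt_trans hx.2 hv1⟩
          rw [(fla_hasDerivAt v x hx01 ⟨hv0, hv1⟩).deriv]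
          have hx0 := hx01.1
          have hx1 := hx01.2
          have hA : (0:ℝ) < 1 - x ^ 2 := by nlinarith
          have hB : (0:ℝ) < 1 - v ^ 2 := by nlinarith
          have hxv : x < v := hx.2
          rw [sub_neg, div_lt_div_iff₀ (by positivity) (by positivity)]
          have k1 : (0:ℝ) < v ^ 2 - x ^ 2 := by nlinarith
          have k2 : (0:ℝ) < v ^ 2 * (1 - x ^ 2) + x ^ 2 * (1 - v ^ 2) := by positivity
          have key : (v ^ 2 - x ^ 2) * (v ^ 2 * (1 - x ^ 2) + x ^ 2 * (1 - v ^ 2))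
              = v ^ 4 * (1 - x ^ 2) ^ 2 - x ^ 4 * (1 - v ^ 2) ^ 2 := by ring
          nlinarith [mul_pos k1 k2]
      have := hanti (Set.left_mem_Icc.mpr h.le) (Set.right_mem_Icc.mpr h.le) h
      have hz := fla_diag v ⟨hv0, hv1⟩
      simp only at this
      linarith
    · subst h
      exact (fla_diag u ⟨hu0, hu1⟩).ge
    · -- v < u : fla · v is strictly monotone on [v, u]
      have hsub : Set.Icc v u ⊆ Set.Ioo (0:ℝ) 1 := fun x hx =>
        ⟨lt_of_lt_of_le hv0 hx.1, lt_of_le_of_lt hx.2 hu1⟩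
      have hmono : StrictMonoOn (fun x => fla x v) (Set.Icc v u) := by
        apply strictMonoOn_of_deriv_pos (convex_Icc v u)
        · intro x hx
          exact (fla_hasDerivAt v x (hsub hx) ⟨hv0, hv1⟩).continuousAt.continuousWithinAt
        · intro x hx
          rw [interior_Icc] at hx
          have hx01 : x ∈ Set.Ioo (0:ℝ) 1 :=
            ⟨lt_trans hv0 hx.1, lt_trans hx.2 hu1⟩
          rw [(fla_hasDerivAt v x hx01 ⟨hv0, hv1⟩).deriv]
          have hx0 := hx01.1
          have hx1 := hx01.2
          have hA : (0:ℝ) < 1 - x ^ 2 := by nlinarith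
          have hB : (0:ℝ) < 1 - v ^ 2 := by nlinarith
          have hvx : v < x := hx.1
          rw [sub_pos, div_lt_div_iff₀ (by positivity) (by positivity)]
          have k1 : (0:ℝ) < x ^ 2 - v ^ 2 := by nlinarith
          have k2 : (0:ℝ) < x ^ 2 * (1 - v ^ 2) + v ^ 2 * (1 - x ^ 2) := by positivity
          have key : (x ^ 2 - v ^ 2) * (x ^ 2 * (1 - v ^ 2) + v ^ 2 * (1 - x ^ 2))
              = x ^ 4 * (1 - v ^ 2) ^ 2 - v ^ 4 * (1 - x ^ 2) ^ 2 := by ring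
          nlinarith [mul_pos k1 k2]
      have := hmono (Set.left_mem_Icc.mpr h.le) (Set.right_mem_Icc.mpr h.le) h
      have hz := fla_diag v ⟨hv0, hv1⟩
      simp only at this
      linarith
  · exact fun u hu => fla_diag u hu
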